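/- The number of non-nesting permutations of {1,1,2,2,...,n,n} equals n! times the n-th Catalan number C_n. -/

import Mathlib

/-- A permutation of the multiset {1,1,2,2,...,n,n}, encoded as a function
`Fin (2*n) → Fin n` where the value `v : Fin n` represents `v+1`:
every value appears exactly twice. -/
def IsMultisetPerm {n : ℕ} (π : Fin (2*n) → Fin n) : Prop :=
  ∀ v : Fin n, (Finset.univ.filter fun i => π i = v).card = 2

/-- Non-nesting: no indices i<j<k<l with π_i=π_l, π_j=π_k, π_i≠π_j. -/
def NonNesting {n : ℕ} (π : Fin (2*n) → Fin n) : Prop :=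
  ¬ ∃ i j k l : Fin (2*n), i < j ∧ j < k ∧ k < l ∧
      π i = π l ∧ π j = π k ∧ π i ≠ π j

/-- Non-crossing: no indices i<j<k<l with π_i=π_k, π_j=π_l, π_i≠π_j. -/
def NonCrossing {n : ℕ} (π : Fin (2*n) → Fin n) : Prop :=
  ¬ ∃ i j k l : Fin (2*n), i < j ∧ j < k ∧ k < l ∧
      π i = π k ∧ π j = π l ∧ π i ≠ π j

/-- Avoiding the pattern 231: no i<j<k with π_k < π_i < π_j. -/
def Avoids231 {n : ℕ} (π : Fin (2*n) → Fin n) : Prop :=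
  ¬ ∃ i j k : Fin (2*n), i < j ∧ j < k ∧ π k < π i ∧ π i < π j

/-- Avoiding 122: no i<j<k with π_i < π_j = π_k. -/
def Avoids122 {n : ℕ} (π : Fin (2*n) → Fin n) : Prop :=
  ¬ ∃ i j k : Fin (2*n), i < j ∧ j < k ∧ π i < π j ∧ π j = π k

/-- The first entry is the value 1 (encoded as `0 : Fin n`). -/
def FirstIsOne {n : ℕ} (π : Fin (2*n) → Fin n) : Prop :=
  ∃ h : 0 < n, π ⟨0, by omega⟩ = ⟨0, h⟩

/-- The last entry is the value n (encoded as `n-1 : Fin n`). -/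
def LastIsMax {n : ℕ} (π : Fin (2*n) → Fin n) : Prop :=
  ∃ h : 0 < n, π ⟨2*n - 1, by omega⟩ = ⟨n - 1, by omega⟩


open Finset DyckStep

/-- Number of `true`s among the first `k` entries. -/
def cntT {m : ℕ} (w : Fin m → Bool) (k : ℕ) : ℕ :=
  (Finset.univ.filter fun i => w i = true ∧ i.val < k).card

def cntF {m : ℕ} (w : Fin m → Bool) (k : ℕ) : ℕ :=
  (Finset.univ.filter fun i => w i = false ∧ i.val < k).card

/-- Ballot sequences of length 2n. -/
def IsBallot {n : ℕ} (w : Fin (2*n) → Bool) : Prop :=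
  (∀ k, cntF w k ≤ cntT w k) ∧ cntT w (2*n) = n

lemma count_take_ofFn {α : Type*} [DecidableEq α] {m : ℕ} (f : Fin m → α) (a : α)
    (k : ℕ) (hk : k ≤ m) :
    (((List.ofFn f).take k).count a)
      = (Finset.univ.filter fun i : Fin m => f i = a ∧ i.val < k).card := by
  induction k with
  | zero => simp
  | succ k ih =>
    have hk' : k < m := hk
    have h1 : (List.ofFn f).take (k+1) = (List.ofFn f).take k ++ [f ⟨k, hk'⟩] := by
      rw [List.take_succ]
      congr 1
      rw [List.getElem?_eq_getElem (by simpa using hk')]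
      simp
    have h2 : (Finset.univ.filter fun i : Fin m => f i = a ∧ i.val < k + 1)
        = (Finset.univ.filter fun i : Fin m => f i = a ∧ i.val < k)
          ∪ (if f ⟨k, hk'⟩ = a then {⟨k, hk'⟩} else ∅) := by
      ext i
      by_cases hfk : f ⟨k, hk'⟩ = a <;>
        simp only [hfk, if_true, if_false, Finset.mem_union, Finset.mem_filter,
          Finset.mem_singleton, Finset.mem_univ, true_and, Finset.notMem_empty, or_false]
      · constructor
        · rintro ⟨hfi, hlt⟩
          rcases Nat.lt_succ_iff_lt_or_eq.mp hlt with h | h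
          · exact Or.inl ⟨hfi, h⟩
          · exact Or.inr (Fin.ext h)
        · rintro (⟨hfi, hlt⟩ | rfl)
          · exact ⟨hfi, hlt.trans (Nat.lt_succ_self k)⟩
          · exact ⟨hfk, Nat.lt_succ_self k⟩
      · constructor
        · rintro ⟨hfi, hlt⟩
          have : i.val ≠ k := fun h => hfk (by rwa [show (⟨k, hk'⟩ : Fin m) = i from Fin.ext h.symm])
          exact ⟨hfi, by omega⟩
        · rintro ⟨hfi, hlt⟩; exact ⟨hfi, by omega⟩
    rw [h1, List.count_append, ih (le_of_lt hk'), h2, Finset.card_union_of_disjoint]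
    · by_cases hfk : f ⟨k, hk'⟩ = a <;> simp [hfk, List.count_singleton']
    · by_cases hfk : f ⟨k, hk'⟩ = a <;> simp [hfk, Finset.disjoint_singleton_right]

lemma cntT_stab {m : ℕ} (w : Fin m → Bool) (k : ℕ) (hk : m ≤ k) : cntT w k = cntT w m := by
  unfold cntT; congr 1; ext i
  simp only [Finset.mem_filter, Finset.mem_univ, true_and]
  have := i.2; constructor <;> rintro ⟨h1, -⟩ <;> exact ⟨h1, by omega⟩

lemma cntF_stab {m : ℕ} (w : Fin m → Bool) (k : ℕ) (hk : m ≤ k) : cntF w k = cntF w m := by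
  unfold cntF; congr 1; ext i
  simp only [Finset.mem_filter, Finset.mem_univ, true_and]
  have := i.2; constructor <;> rintro ⟨h1, -⟩ <;> exact ⟨h1, by omega⟩

lemma cntT_add_cntF {m : ℕ} (w : Fin m → Bool) : cntT w m + cntF w m = m := by
  unfold cntT cntF
  rw [← Finset.card_union_of_disjoint]
  · have : ((Finset.univ.filter fun i : Fin m => w i = true ∧ i.val < m)
        ∪ (Finset.univ.filter fun i : Fin m => w i = false ∧ i.val < m)) = Finset.univ := by
      ext i; simp only [Finset.mem_union, Finset.mem_filter, Finset.mem_univ, true_and, iff_true]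
      cases h : w i
      · exact Or.inr ⟨rfl, i.2⟩
      · exact Or.inl ⟨rfl, i.2⟩
    rw [this, Finset.card_univ, Fintype.card_fin]
  · rw [Finset.disjoint_left]
    intro i hi hj
    have h1 := (Finset.mem_filter.mp hi).2.1
    have h2 := (Finset.mem_filter.mp hj).2.1
    simp_all

lemma dyck_toList_eq_ofFn {n : ℕ} (p : DyckWord) (hp : p.semilength = n)
    (hl : p.toList.length = 2*n) :
    p.toList = List.ofFn (fun i : Fin (2*n) => p.toList.get (Fin.cast hl.symm i)) := by
  apply List.ext_get
  · simp [hl]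
  · intro i h1 h2
    simp

lemma dyck_count_take (n : ℕ) (p : DyckWord) (hp : p.semilength = n)
    (hl : p.toList.length = 2*n) (a : DyckStep) (k : ℕ) (hk : k ≤ 2*n) :
    (p.toList.take k).count a
      = (Finset.univ.filter fun i : Fin (2*n) =>
          p.toList.get (Fin.cast hl.symm i) = a ∧ i.val < k).card := by
  conv_lhs => rw [dyck_toList_eq_ofFn p hp hl]
  exact count_take_ofFn _ a k hk

/-- The underlying `Bool`-valued function of a Dyck word. -/
def dyckFn {n : ℕ} (p : DyckWord) (hl : p.toList.length = 2*n) : Fin (2*n) → Bool :=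
  fun i => p.toList.get (Fin.cast hl.symm i) = U

lemma dyckFn_true_iff {n : ℕ} (p : DyckWord) (hl : p.toList.length = 2*n) (i : Fin (2*n)) :
    dyckFn p hl i = true ↔ p.toList.get (Fin.cast hl.symm i) = U := by
  unfold dyckFn; simp

lemma dyckFn_false_iff {n : ℕ} (p : DyckWord) (hl : p.toList.length = 2*n) (i : Fin (2*n)) :
    dyckFn p hl i = false ↔ p.toList.get (Fin.cast hl.symm i) = D := by
  unfold dyckFn
  rcases (p.toList.get (Fin.cast hl.symm i)).dichotomy with h | h <;>
    rw [List.get_eq_getElem] at h <;> simp only [Fin.coe_cast] at h <;> simp [h]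

lemma dyck_cntT {n : ℕ} (p : DyckWord) (hp : p.semilength = n) (hl : p.toList.length = 2*n)
    (k : ℕ) (hk : k ≤ 2*n) : (p.toList.take k).count U = cntT (dyckFn p hl) k := by
  rw [dyck_count_take n p hp hl U k hk]; unfold cntT; congr 1; ext i
  simp only [Finset.mem_filter, dyckFn_true_iff]

lemma dyck_cntF {n : ℕ} (p : DyckWord) (hp : p.semilength = n) (hl : p.toList.length = 2*n)
    (k : ℕ) (hk : k ≤ 2*n) : (p.toList.take k).count D = cntF (dyckFn p hl) k := by
  rw [dyck_count_take n p hp hl D k hk]; unfold cntF; congr 1; ext i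
  simp only [Finset.mem_filter, dyckFn_false_iff]

lemma dyckFn_ballot {n : ℕ} (p : DyckWord) (hp : p.semilength = n)
    (hl : p.toList.length = 2*n) : IsBallot (dyckFn p hl) := by
  constructor
  · intro k
    by_cases hk : k ≤ 2*n
    · rw [← dyck_cntT p hp hl k hk, ← dyck_cntF p hp hl k hk]
      exact p.count_D_le_count_U k
    · rw [cntT_stab _ k (by omega), cntF_stab _ k (by omega),
        ← dyck_cntT p hp hl (2*n) le_rfl, ← dyck_cntF p hp hl (2*n) le_rfl]
      exact p.count_D_le_count_U (2*n)
  · have h1 := dyck_cntT p hp hl (2*n) le_rfl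
    rw [List.take_of_length_le (le_of_eq hl)] at h1
    rw [← h1, ← hp]; rfl

/-- The list of Dyck steps associated to a Bool sequence. -/
def ballotList {n : ℕ} (w : Fin (2*n) → Bool) : List DyckStep :=
  List.ofFn (fun i => if w i then U else D)

lemma ballotList_length {n : ℕ} (w : Fin (2*n) → Bool) : (ballotList w).length = 2*n := by
  simp [ballotList]

lemma ballotList_count_U {n : ℕ} (w : Fin (2*n) → Bool) (k : ℕ) (hk : k ≤ 2*n) :
    ((ballotList w).take k).count U = cntT w k := by
  rw [ballotList, count_take_ofFn _ U k hk]; unfold cntT; congr 1; ext i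
  simp only [Finset.mem_filter]
  cases h : w i <;> simp [h]

lemma ballotList_count_D {n : ℕ} (w : Fin (2*n) → Bool) (k : ℕ) (hk : k ≤ 2*n) :
    ((ballotList w).take k).count D = cntF w k := by
  rw [ballotList, count_take_ofFn _ D k hk]; unfold cntF; congr 1; ext i
  simp only [Finset.mem_filter]
  cases h : w i <;> simp [h]

/-- The Dyck word associated to a ballot sequence. -/
def ballotDyck {n : ℕ} (w : Fin (2*n) → Bool) (hw : IsBallot w) : DyckWord where
  toList := ballotList w
  count_U_eq_count_D := by
    have h1 : (ballotList w).take (2*n) = ballotList w :=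
      List.take_of_length_le (le_of_eq (ballotList_length w))
    have h2 := ballotList_count_U w (2*n) le_rfl
    have h3 := ballotList_count_D w (2*n) le_rfl
    have h4 := cntT_add_cntF w
    rw [h1] at h2 h3
    rw [h2, h3]
    have h5 := hw.1 (2*n)
    have h6 := hw.2
    omega
  count_D_le_count_U i := by
    by_cases hi : i ≤ 2*n
    · rw [ballotList_count_U w i hi, ballotList_count_D w i hi]; exact hw.1 i
    · rw [List.take_of_length_le (by rw [ballotList_length]; omega),
        ← List.take_of_length_le (le_of_eq (ballotList_length w)),
        ballotList_count_U w (2*n) le_rfl, ballotList_count_D w (2*n) le_rfl]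
      exact hw.1 (2*n)

lemma ballotDyck_semilength {n : ℕ} (w : Fin (2*n) → Bool) (hw : IsBallot w) :
    (ballotDyck w hw).semilength = n := by
  have h2 := ballotList_count_U w (2*n) le_rfl
  rw [List.take_of_length_le (le_of_eq (ballotList_length w))] at h2
  show (ballotList w).count U = n
  rw [h2, hw.2]

/-- Ballot sequences are equinumerous with Dyck words of semilength `n`. -/
def ballotEquivDyck (n : ℕ) :
    {w : Fin (2*n) → Bool // IsBallot w} ≃ {p : DyckWord // p.semilength = n} where
  toFun w := ⟨ballotDyck w.1 w.2, ballotDyck_semilength w.1 w.2⟩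
  invFun p := ⟨dyckFn p.1 (by rw [← DyckWord.two_mul_semilength_eq_length, p.2]),
    dyckFn_ballot p.1 p.2 _⟩
  left_inv w := by
    apply Subtype.ext
    funext i
    simp only [dyckFn]
    have hballot : (ballotDyck w.1 w.2).toList = ballotList w.1 := rfl
    cases h : w.1 i <;>
      simp [hballot, ballotList, List.get_eq_getElem, List.getElem_ofFn, h]
  right_inv p := by
    apply Subtype.ext
    apply DyckWord.ext
    have hl : (p.1).toList.length = 2*n := by
      rw [← DyckWord.two_mul_semilength_eq_length, p.2]
    show ballotList (dyckFn p.1 hl) = (p.1).toList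
    conv_rhs => rw [dyck_toList_eq_ofFn p.1 p.2 hl]
    unfold ballotList
    congr 1
    funext i
    rcases (p.1.toList.get (Fin.cast hl.symm i)).dichotomy with h | h <;>
      rw [List.get_eq_getElem] at h <;> simp only [Fin.coe_cast] at h <;>
      simp [dyckFn, h]

section Main
variable {n : ℕ} {w : Fin (2*n) → Bool}

def trueSet {m : ℕ} (w : Fin m → Bool) : Finset (Fin m) := Finset.univ.filter (fun i => w i = true)
def falseSet {m : ℕ} (w : Fin m → Bool) : Finset (Fin m) := Finset.univ.filter (fun i => w i = false)

@[simp] lemma mem_trueSet {m : ℕ} {w : Fin m → Bool} {i : Fin m} :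
    i ∈ trueSet w ↔ w i = true := by simp [trueSet]
@[simp] lemma mem_falseSet {m : ℕ} {w : Fin m → Bool} {i : Fin m} :
    i ∈ falseSet w ↔ w i = false := by simp [falseSet]

lemma trueSet_card (hw : IsBallot w) : (trueSet w).card = n := by
  have h : (trueSet w).card = cntT w (2*n) := by
    unfold cntT trueSet; congr 1; ext i
    simp only [Finset.mem_filter, Finset.mem_univ, true_and]
    exact ⟨fun h => ⟨h, i.2⟩, fun h => h.1⟩
  rw [h, hw.2]

lemma cntF_full (hw : IsBallot w) : cntF w (2*n) = n := by
  have := cntT_add_cntF w; have := hw.2; omega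

lemma falseSet_card (hw : IsBallot w) : (falseSet w).card = n := by
  have h : (falseSet w).card = cntF w (2*n) := by
    unfold cntF falseSet; congr 1; ext i
    simp only [Finset.mem_filter, Finset.mem_univ, true_and]
    exact ⟨fun h => ⟨h, i.2⟩, fun h => h.1⟩
  rw [h, cntF_full hw]

/-- The `a`-th opener (position of the `(a+1)`-th `true`). -/
def opn (hw : IsBallot w) : Fin n → Fin (2*n) := (trueSet w).orderEmbOfFin (trueSet_card hw)
/-- The `a`-th closer. -/
def cls (hw : IsBallot w) : Fin n → Fin (2*n) := (falseSet w).orderEmbOfFin (falseSet_card hw)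

lemma opn_strictMono (hw : IsBallot w) : StrictMono (opn hw) :=
  ((trueSet w).orderEmbOfFin (trueSet_card hw)).strictMono
lemma cls_strictMono (hw : IsBallot w) : StrictMono (cls hw) :=
  ((falseSet w).orderEmbOfFin (falseSet_card hw)).strictMono
lemma opn_mem (hw : IsBallot w) (a : Fin n) : w (opn hw a) = true :=
  mem_trueSet.mp ((trueSet w).orderEmbOfFin_mem (trueSet_card hw) a)
lemma cls_mem (hw : IsBallot w) (a : Fin n) : w (cls hw a) = false :=
  mem_falseSet.mp ((falseSet w).orderEmbOfFin_mem (falseSet_card hw) a)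
lemma opn_surj (hw : IsBallot w) {i : Fin (2*n)} (hi : w i = true) : ∃ a, opn hw a = i := by
  have : i ∈ Set.range (opn hw) := by
    rw [show Set.range (opn hw) = ↑(trueSet w) from (trueSet w).range_orderEmbOfFin _]
    simpa using hi
  exact this
lemma cls_surj (hw : IsBallot w) {i : Fin (2*n)} (hi : w i = false) : ∃ a, cls hw a = i := by
  have : i ∈ Set.range (cls hw) := by
    rw [show Set.range (cls hw) = ↑(falseSet w) from (falseSet w).range_orderEmbOfFin _]
    simpa using hi
  exact this

lemma opn_eq_iso (hw : IsBallot w) (a : Fin n) :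
    opn hw a = ((trueSet w).orderIsoOfFin (trueSet_card hw) a : Fin (2*n)) :=
  ((trueSet w).coe_orderIsoOfFin_apply (trueSet_card hw) a).symm

lemma cls_eq_iso (hw : IsBallot w) (a : Fin n) :
    cls hw a = ((falseSet w).orderIsoOfFin (falseSet_card hw) a : Fin (2*n)) :=
  ((falseSet w).coe_orderIsoOfFin_apply (falseSet_card hw) a).symm

lemma cntT_eq_rank (hw : IsBallot w) (k : ℕ) :
    cntT w k = (Finset.univ.filter fun a : Fin n => (opn hw a).val < k).card := by
  apply Finset.card_bij'
    (i := fun x hx => ((trueSet w).orderIsoOfFin (trueSet_card hw)).symm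
      ⟨x, mem_trueSet.mpr (Finset.mem_filter.mp hx).2.1⟩)
    (j := fun a _ => opn hw a) ?hi ?hj ?left ?right
  case hi =>
    intro x hx
    simp only [Finset.mem_filter, Finset.mem_univ, true_and]
    rw [opn_eq_iso, OrderIso.apply_symm_apply]
    exact (Finset.mem_filter.mp hx).2.2
  case hj =>
    intro a ha
    simp only [Finset.mem_filter, Finset.mem_univ, true_and]
    exact ⟨opn_mem hw a, (Finset.mem_filter.mp ha).2⟩
  case left =>
    intro x hx
    simp only [opn_eq_iso hw]
    exact congrArg Subtype.val
      (((trueSet w).orderIsoOfFin (trueSet_card hw)).apply_symm_apply ⟨x, _⟩)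
  case right =>
    intro a ha
    refine ((trueSet w).orderIsoOfFin (trueSet_card hw)).injective ?_
    rw [OrderIso.apply_symm_apply]
    exact Subtype.ext (opn_eq_iso hw a).symm

lemma cntF_eq_rank (hw : IsBallot w) (k : ℕ) :
    cntF w k = (Finset.univ.filter fun a : Fin n => (cls hw a).val < k).card := by
  apply Finset.card_bij'
    (i := fun x hx => ((falseSet w).orderIsoOfFin (falseSet_card hw)).symm
      ⟨x, mem_falseSet.mpr (Finset.mem_filter.mp hx).2.1⟩)
    (j := fun a _ => cls hw a) ?hi ?hj ?left ?right
  case hi =>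
    intro x hx
    simp only [Finset.mem_filter, Finset.mem_univ, true_and]
    rw [cls_eq_iso, OrderIso.apply_symm_apply]
    exact (Finset.mem_filter.mp hx).2.2
  case hj =>
    intro a ha
    simp only [Finset.mem_filter, Finset.mem_univ, true_and]
    exact ⟨cls_mem hw a, (Finset.mem_filter.mp ha).2⟩
  case left =>
    intro x hx
    simp only [cls_eq_iso hw]
    exact congrArg Subtype.val
      (((falseSet w).orderIsoOfFin (falseSet_card hw)).apply_symm_apply ⟨x, _⟩)
  case right =>
    intro a ha
    refine ((falseSet w).orderIsoOfFin (falseSet_card hw)).injective ?_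
    rw [OrderIso.apply_symm_apply]
    exact Subtype.ext (cls_eq_iso hw a).symm

/-- In a ballot sequence the `a`-th opener precedes the `a`-th closer. -/
lemma opn_lt_cls (hw : IsBallot w) (a : Fin n) : opn hw a < cls hw a := by
  by_contra hcon
  push_neg at hcon
  have hne : cls hw a ≠ opn hw a := by
    intro h
    have h1 := opn_mem hw a
    rw [← h, cls_mem hw a] at h1
    exact Bool.false_ne_true h1
  have hlt : cls hw a < opn hw a := hcon.lt_of_ne hne
  set k : ℕ := (cls hw a).val + 1 with hk
  have hT : cntT w k ≤ a.val := by
    rw [cntT_eq_rank hw k]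
    have hsub : (Finset.univ.filter fun b : Fin n => (opn hw b).val < k)
        ⊆ Finset.Iio a := by
      intro b hb
      simp only [Finset.mem_filter, Finset.mem_univ, true_and] at hb
      rw [Finset.mem_Iio]
      by_contra hba
      push_neg at hba
      have h1 : (opn hw a).val ≤ (opn hw b).val := (opn_strictMono hw).monotone hba
      have h2 : (cls hw a).val < (opn hw a).val := hlt
      omega
    calc _ ≤ (Finset.Iio a).card := Finset.card_le_card hsub
      _ = a.val := Fin.card_Iio a
  have hF : a.val + 1 ≤ cntF w k := by
    rw [cntF_eq_rank hw k]
    have hsub : Finset.Iic a ⊆ (Finset.univ.filter fun b : Fin n => (cls hw b).val < k) := by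
      intro b hb
      rw [Finset.mem_Iic] at hb
      simp only [Finset.mem_filter, Finset.mem_univ, true_and]
      have h1 : (cls hw b).val ≤ (cls hw a).val := (cls_strictMono hw).monotone hb
      omega
    calc a.val + 1 = (Finset.Iic a).card := (Fin.card_Iic a).symm
      _ ≤ _ := Finset.card_le_card hsub
  have := hw.1 k
  omega

/-- The non-nesting permutation built from a label permutation and a ballot sequence. -/
def phi (σ : Equiv.Perm (Fin n)) (hw : IsBallot w) : Fin (2*n) → Fin n :=
  fun i =>
    if h : w i = true then
      σ (((trueSet w).orderIsoOfFin (trueSet_card hw)).symm ⟨i, mem_trueSet.mpr h⟩)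
    else
      σ (((falseSet w).orderIsoOfFin (falseSet_card hw)).symm
        ⟨i, mem_falseSet.mpr (Bool.eq_false_iff.mpr h)⟩)

lemma symm_opn (hw : IsBallot w) (a : Fin n) (h) :
    ((trueSet w).orderIsoOfFin (trueSet_card hw)).symm ⟨opn hw a, h⟩ = a := by
  refine ((trueSet w).orderIsoOfFin (trueSet_card hw)).injective ?_
  rw [OrderIso.apply_symm_apply]
  exact Subtype.ext (opn_eq_iso hw a).symm

lemma symm_cls (hw : IsBallot w) (a : Fin n) (h) :
    ((falseSet w).orderIsoOfFin (falseSet_card hw)).symm ⟨cls hw a, h⟩ = a := by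
  refine ((falseSet w).orderIsoOfFin (falseSet_card hw)).injective ?_
  rw [OrderIso.apply_symm_apply]
  exact Subtype.ext (cls_eq_iso hw a).symm

lemma phi_opn (σ : Equiv.Perm (Fin n)) (hw : IsBallot w) (a : Fin n) :
    phi σ hw (opn hw a) = σ a := by
  unfold phi
  rw [dif_pos (opn_mem hw a), symm_opn hw a]

lemma phi_cls (σ : Equiv.Perm (Fin n)) (hw : IsBallot w) (a : Fin n) :
    phi σ hw (cls hw a) = σ a := by
  unfold phi
  rw [dif_neg (by rw [cls_mem hw a]; exact Bool.false_ne_true), symm_cls hw a]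

lemma phi_fiber (σ : Equiv.Perm (Fin n)) (hw : IsBallot w) (i : Fin (2*n)) (a : Fin n) :
    phi σ hw i = σ a ↔ i = opn hw a ∨ i = cls hw a := by
  constructor
  · intro h
    by_cases hwi : w i = true
    · left
      unfold phi at h
      rw [dif_pos hwi] at h
      have := σ.injective h
      have h2 : (⟨i, mem_trueSet.mpr hwi⟩ : {x // x ∈ trueSet w})
          = (trueSet w).orderIsoOfFin (trueSet_card hw) a := by
        rw [← this, OrderIso.apply_symm_apply]
      rw [opn_eq_iso, ← h2]
    · right
      unfold phi at h
      rw [dif_neg hwi] at h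
      have := σ.injective h
      have h2 : (⟨i, mem_falseSet.mpr (Bool.eq_false_iff.mpr hwi)⟩ : {x // x ∈ falseSet w})
          = (falseSet w).orderIsoOfFin (falseSet_card hw) a := by
        rw [← this, OrderIso.apply_symm_apply]
      rw [cls_eq_iso, ← h2]
  · rintro (rfl | rfl)
    · exact phi_opn σ hw a
    · exact phi_cls σ hw a

lemma opn_ne_cls (hw : IsBallot w) (a b : Fin n) : opn hw a ≠ cls hw b := by
  intro h
  have h1 := opn_mem hw a
  rw [h, cls_mem hw b] at h1
  exact Bool.false_ne_true h1

lemma phi_multisetPerm (σ : Equiv.Perm (Fin n)) (hw : IsBallot w) :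
    IsMultisetPerm (phi σ hw) := by
  intro v
  have hv : v = σ (σ.symm v) := (σ.apply_symm_apply v).symm
  set a := σ.symm v with ha
  have hset : (Finset.univ.filter fun i => phi σ hw i = v)
      = {opn hw a, cls hw a} := by
    ext i
    simp only [Finset.mem_filter, Finset.mem_univ, true_and, Finset.mem_insert,
      Finset.mem_singleton]
    rw [hv, phi_fiber σ hw i a]
  rw [hset]
  exact Finset.card_pair (opn_ne_cls hw a a)

lemma phi_nonNesting (σ : Equiv.Perm (Fin n)) (hw : IsBallot w) :
    NonNesting (phi σ hw) := by
  rintro ⟨i, j, k, l, hij, hjk, hkl, h1, h2, h3⟩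
  set a := σ.symm (phi σ hw i) with ha
  set b := σ.symm (phi σ hw j) with hb
  have hia : phi σ hw i = σ a := (σ.apply_symm_apply _).symm
  have hjb : phi σ hw j = σ b := (σ.apply_symm_apply _).symm
  have hi := (phi_fiber σ hw i a).mp hia
  have hl := (phi_fiber σ hw l a).mp (h1 ▸ hia)
  have hj := (phi_fiber σ hw j b).mp hjb
  have hk := (phi_fiber σ hw k b).mp (h2 ▸ hjb)
  have hil : i < l := hij.trans (hjk.trans hkl)
  have hioc : i = opn hw a ∧ l = cls hw a := by
    rcases hi with h | h <;> rcases hl with h' | h'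
    · exfalso; rw [h, h'] at hil; exact lt_irrefl _ hil
    · exact ⟨h, h'⟩
    · exfalso; rw [h, h'] at hil; exact absurd (opn_lt_cls hw a) (asymm hil)
    · exfalso; rw [h, h'] at hil; exact lt_irrefl _ hil
  have hjoc : j = opn hw b ∧ k = cls hw b := by
    rcases hj with h | h <;> rcases hk with h' | h'
    · exfalso; rw [h, h'] at hjk; exact lt_irrefl _ hjk
    · exact ⟨h, h'⟩
    · exfalso; rw [h, h'] at hjk; exact absurd (opn_lt_cls hw b) (asymm hjk)
    · exfalso; rw [h, h'] at hjk; exact lt_irrefl _ hjk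
  rw [hioc.1, hjoc.1] at hij
  rw [hjoc.2, hioc.2] at hkl
  have hab : a < b := (opn_strictMono hw).lt_iff_lt.mp hij
  have hba : b < a := (cls_strictMono hw).lt_iff_lt.mp hkl
  exact absurd hab (asymm hba)

lemma phi_first_iff (σ : Equiv.Perm (Fin n)) (hw : IsBallot w) (i : Fin (2*n)) :
    w i = true ↔ ∀ j, j < i → phi σ hw j ≠ phi σ hw i := by
  constructor
  · intro hwi j hji hphi
    obtain ⟨a, rfl⟩ := opn_surj hw hwi
    rw [phi_opn] at hphi
    rcases (phi_fiber σ hw j a).mp hphi with rfl | rfl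
    · exact lt_irrefl _ hji
    · exact absurd (opn_lt_cls hw a) (asymm hji)
  · intro h
    by_contra hwi
    have hwf : w i = false := Bool.eq_false_iff.mpr hwi
    obtain ⟨a, rfl⟩ := cls_surj hw hwf
    exact h (opn hw a) (opn_lt_cls hw a) (by rw [phi_opn, phi_cls])

/-- The map from (labels, ballot sequence) to non-nesting multiset permutations. -/
def Phi (n : ℕ) :
    (Equiv.Perm (Fin n)) × {w : Fin (2*n) → Bool // IsBallot w} →
      {π : Fin (2*n) → Fin n // IsMultisetPerm π ∧ NonNesting π} :=
  fun x => ⟨phi x.1 x.2.2, phi_multisetPerm x.1 x.2.2, phi_nonNesting x.1 x.2.2⟩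

lemma Phi_injective (n : ℕ) : Function.Injective (Phi n) := by
  rintro ⟨σ, w, hw⟩ ⟨σ', w', hw'⟩ h
  have hfn : phi σ hw = phi σ' hw' := congrArg Subtype.val h
  have hww : w = w' := by
    funext i
    have h1 := phi_first_iff σ hw i
    have h2 := phi_first_iff σ' hw' i
    rw [Bool.eq_iff_iff]
    rw [h1, h2, hfn]
  subst hww
  have hσ : σ = σ' := by
    apply Equiv.ext
    intro a
    have hc := congrFun hfn (opn hw a)
    rw [phi_opn] at hc
    exact hc.trans (phi_opn σ' hw' a)
  subst hσ
  rfl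

lemma Phi_surjective (n : ℕ) : Function.Surjective (Phi n) := by
  rintro ⟨π, hmp, hnn⟩
  classical
  set fib : Fin n → Finset (Fin (2*n)) := fun v => Finset.univ.filter fun i => π i = v
    with hfib
  have hcard : ∀ v, (fib v).card = 2 := hmp
  have hnonem : ∀ v, (fib v).Nonempty := fun v =>
    Finset.card_pos.mp (by rw [hcard]; norm_num)
  set ov : Fin n → Fin (2*n) := fun v => (fib v).min' (hnonem v) with hovdef
  set cv : Fin n → Fin (2*n) := fun v => (fib v).max' (hnonem v) with hcvdef
  have hovmem : ∀ v, π (ov v) = v := fun v =>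
    (Finset.mem_filter.mp ((fib v).min'_mem (hnonem v))).2
  have hcvmem : ∀ v, π (cv v) = v := fun v =>
    (Finset.mem_filter.mp ((fib v).max'_mem (hnonem v))).2
  have hoc : ∀ v, ov v < cv v := fun v =>
    Finset.min'_lt_max'_of_card _ (by rw [hcard]; norm_num)
  have htwo : ∀ i, i = ov (π i) ∨ i = cv (π i) := by
    intro i
    have hi : i ∈ fib (π i) := by simp [hfib]
    have hsub : ({ov (π i), cv (π i)} : Finset (Fin (2*n))) ⊆ fib (π i) := by
      intro x hx
      rcases Finset.mem_insert.mp hx with rfl | hx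
      · exact (fib (π i)).min'_mem (hnonem (π i))
      · rw [Finset.mem_singleton.mp hx]
        exact (fib (π i)).max'_mem (hnonem (π i))
    have heq : ({ov (π i), cv (π i)} : Finset (Fin (2*n))) = fib (π i) :=
      Finset.eq_of_subset_of_card_le hsub
        (by rw [hcard, Finset.card_pair (ne_of_lt (hoc (π i)))])
    rw [← heq] at hi
    simpa using hi
  set w : Fin (2*n) → Bool := fun i => decide (i = ov (π i)) with hwdef
  have hwtrue : ∀ i, w i = true ↔ i = ov (π i) := by intro i; simp [hwdef]
  have hwfalse : ∀ i, w i = false ↔ i = cv (π i) := by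
    intro i
    rw [← Bool.not_eq_true, hwtrue]
    constructor
    · intro h; exact (htwo i).resolve_left h
    · intro h hcon
      have h8 : ov (π i) = cv (π i) := hcon.symm.trans h
      have h9 := hoc (π i)
      rw [h8] at h9
      exact lt_irrefl _ h9
  have hov_true : ∀ v, w (ov v) = true := by
    intro v; rw [hwtrue, hovmem]
  have hcv_false : ∀ v, w (cv v) = false := by
    intro v; rw [hwfalse, hcvmem]
  have hov_inj : Function.Injective ov := fun v v' h => by
    rw [← hovmem v, ← hovmem v', h]
  have hcv_inj : Function.Injective cv := fun v v' h => by
    rw [← hcvmem v, ← hcvmem v', h]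
  have hts : trueSet w = Finset.univ.image ov := by
    ext i
    simp only [mem_trueSet, Finset.mem_image, Finset.mem_univ, true_and, hwtrue]
    constructor
    · intro h; exact ⟨π i, h.symm⟩
    · rintro ⟨v, rfl⟩; rw [hovmem]
  have hw : IsBallot w := by
    constructor
    · intro k
      apply Finset.card_le_card_of_injOn (fun i => ov (π i))
      · intro i hi
        simp only [Finset.mem_coe, Finset.mem_filter, Finset.mem_univ, true_and] at hi ⊢
        have hi2 : i = cv (π i) := (hwfalse i).mp hi.1
        refine ⟨hov_true (π i), ?_⟩
        have h3 : (ov (π i)).val < (cv (π i)).val := hoc (π i)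
        have h4 : (cv (π i)).val = i.val := congrArg Fin.val hi2.symm
        omega
      · intro i hi j hj hij
        have h5 : π i = π j := hov_inj hij
        have hi2 : i = cv (π i) :=
          (hwfalse i).mp (Finset.mem_filter.mp hi).2.1
        have hj2 : j = cv (π j) :=
          (hwfalse j).mp (Finset.mem_filter.mp hj).2.1
        rw [hi2, hj2, h5]
    · have h6 : cntT w (2*n) = (trueSet w).card := by
        unfold cntT trueSet; congr 1; ext i
        simp only [Finset.mem_filter, Finset.mem_univ, true_and]
        exact ⟨fun h => h.1, fun h => ⟨h, i.2⟩⟩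
      rw [h6, hts, Finset.card_image_of_injective _ hov_inj, Finset.card_univ,
        Fintype.card_fin]
  -- openers are first occurrences
  have hopn_ov : ∀ a, opn hw a = ov (π (opn hw a)) := fun a => (hwtrue _).mp (opn_mem hw a)
  have hcls_cv : ∀ a, cls hw a = cv (π (cls hw a)) := fun a => (hwfalse _).mp (cls_mem hw a)
  -- the matching permutation m
  set m : Fin n → Fin n := fun a => ((falseSet w).orderIsoOfFin (falseSet_card hw)).symm
    ⟨cv (π (opn hw a)), mem_falseSet.mpr (hcv_false (π (opn hw a)))⟩ with hmdef
  have hclsm : ∀ a, cls hw (m a) = cv (π (opn hw a)) := by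
    intro a
    rw [cls_eq_iso, hmdef, OrderIso.apply_symm_apply]
  have hminj : Function.Injective m := by
    intro a b hab
    have h1 : cv (π (opn hw a)) = cv (π (opn hw b)) := by
      rw [← hclsm, ← hclsm, hab]
    have h2 : π (opn hw a) = π (opn hw b) := hcv_inj h1
    have h3 : opn hw a = opn hw b := by
      rw [hopn_ov a, hopn_ov b, h2]
    exact (opn_strictMono hw).injective h3
  have hπo_ne : ∀ a b : Fin n, a ≠ b → π (opn hw a) ≠ π (opn hw b) := by
    intro a b hne hcon
    exact hne ((opn_strictMono hw).injective (by rw [hopn_ov a, hopn_ov b, hcon]))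
  have hmmono : StrictMono m := by
    intro a b hab
    rcases lt_trichotomy (m a) (m b) with h | h | h
    · exact h
    · exact absurd (hminj h) (ne_of_lt hab)
    · exfalso
      apply hnn
      refine ⟨opn hw a, opn hw b, cls hw (m b), cls hw (m a), opn_strictMono hw hab, ?_,
        cls_strictMono hw h, ?_, ?_, ?_⟩
      · calc opn hw b = ov (π (opn hw b)) := hopn_ov b
          _ < cv (π (opn hw b)) := hoc _
          _ = cls hw (m b) := (hclsm b).symm
      · rw [hclsm a, hcvmem]
      · rw [hclsm b, hcvmem]
      · exact hπo_ne a b (ne_of_lt hab)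
  have hmid : m = id := by
    apply (hmmono.range_inj strictMono_id).mp
    rw [Set.range_id]
    exact Set.range_eq_univ.mpr (Finite.surjective_of_injective hminj)
  have hfifo : ∀ a, π (cls hw a) = π (opn hw a) := by
    intro a
    have h7 := hclsm a
    rw [hmid, id_eq] at h7
    rw [h7, hcvmem]
  have hπo_inj : Function.Injective (fun a => π (opn hw a)) := fun a b h => by
    by_contra hne
    exact hπo_ne a b hne h
  set σ : Equiv.Perm (Fin n) := Equiv.ofBijective _
    ((Fintype.bijective_iff_injective_and_card _).mpr ⟨hπo_inj, rfl⟩) with hσdef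
  have hσ_app : ∀ a, σ a = π (opn hw a) := fun a => rfl
  refine ⟨(σ, ⟨w, hw⟩), ?_⟩
  apply Subtype.ext
  funext i
  show phi σ hw i = π i
  by_cases hwi : w i = true
  · obtain ⟨a, rfl⟩ := opn_surj hw hwi
    rw [phi_opn, hσ_app]
  · obtain ⟨a, rfl⟩ := cls_surj hw (Bool.eq_false_iff.mpr hwi)
    rw [phi_cls, hσ_app, hfifo]

end Main

theorem stmt2 (n : ℕ) :
    Nat.card {π : Fin (2*n) → Fin n // IsMultisetPerm π ∧ NonNesting π} =
      n.factorial * (Nat.choose (2*n) n / (n+1)) := by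
  have e1 : {π : Fin (2*n) → Fin n // IsMultisetPerm π ∧ NonNesting π}
      ≃ (Equiv.Perm (Fin n)) × {w : Fin (2*n) → Bool // IsBallot w} :=
    (Equiv.ofBijective (Phi n) ⟨Phi_injective n, Phi_surjective n⟩).symm
  rw [Nat.card_congr e1, Nat.card_prod, Nat.card_congr (ballotEquivDyck n),
    Nat.card_eq_fintype_card, Nat.card_eq_fintype_card,
    DyckWord.card_dyckWord_semilength_eq_catalan, Fintype.card_perm, Fintype.card_fin,
    catalan_eq_centralBinom_div]
  rfl
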